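/- For all real parameters α > -1/2 and β > -1/2, every nonnegative integer ℓ, and every real x with -1 ≤ x < 1, one has Σ_{k=0}^{ℓ} (2k+α+β+1) · (Γ(k+α+β+1)/Γ(k+β+1)) · P_k^{(α,β)}(x) = (Γ(ℓ+α+β+2)/Γ(ℓ+β+1)) · P_ℓ^{(α+1,β)}(x). -/

import Mathlib

open Real MeasureTheory

/-- Generalized binomial coefficient `C(a, j) = a(a-1)⋯(a-j+1)/j!`. -/
noncomputable def genBinom (a : ℝ) (j : ℕ) : ℝ :=
  (∏ i ∈ Finset.range j, (a - i)) / (Nat.factorial j)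

/-- Jacobi polynomial `P_ℓ^{(α,β)}(x)`. -/
noncomputable def jacobiP (α β : ℝ) (l : ℕ) (x : ℝ) : ℝ :=
  ∑ k ∈ Finset.range (l + 1),
    genBinom ((l : ℝ) + α) (l - k) * genBinom ((l : ℝ) + β) k *
      ((x - 1) / 2) ^ k * ((x + 1) / 2) ^ (l - k)

/-- Gegenbauer (ultraspherical) polynomial `C_m^{(λ)}(x)`. -/
noncomputable def gegenbauerC (m : ℕ) (lam : ℝ) (x : ℝ) : ℝ :=
  ∑ k ∈ Finset.range (m / 2 + 1),
    (-1 : ℝ) ^ k *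
      (Real.Gamma (lam + m - k) /
        (Real.Gamma lam * (Nat.factorial k) * (Nat.factorial (m - 2 * k)))) *
      (2 * x) ^ (m - 2 * k)

/-- Pochhammer symbol `(q)_k = q(q+1)⋯(q+k-1)`. -/
noncomputable def poch (q : ℝ) (k : ℕ) : ℝ := ∏ i ∈ Finset.range k, (q + i)

/-- Terminating Gauss hypergeometric function `₂F₁(-m, b; c; z)`. -/
noncomputable def hyp2F1 (m : ℕ) (b c z : ℝ) : ℝ :=
  ∑ k ∈ Finset.range (m + 1),
    poch (-(m : ℝ)) k * poch b k / (poch c k * (Nat.factorial k)) * z ^ k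

/-- The operator `(Df)(u) = -(1/sin u) f'(u)`. -/
noncomputable def Dop (f : ℝ → ℝ) : ℝ → ℝ := fun u => -(1 / Real.sin u) * deriv f u

lemma genBinom_zero (a : ℝ) : genBinom a 0 = 1 := by simp [genBinom]

lemma genBinom_succ_mul (a : ℝ) (j : ℕ) :
    ((j : ℝ) + 1) * genBinom a (j + 1) = (a - j) * genBinom a j := by
  have h : (Nat.factorial (j+1) : ℝ) = (j+1) * Nat.factorial j := by
    push_cast [Nat.factorial_succ]; ring
  simp only [genBinom, Finset.prod_range_succ, h]
  have h1 : (Nat.factorial j : ℝ) ≠ 0 := by positivity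
  field_simp

lemma genBinom_pascal (a : ℝ) (j : ℕ) :
    genBinom (a + 1) (j + 1) = genBinom a (j + 1) + genBinom a j := by
  have h1 : ∏ i ∈ Finset.range (j+1), (a + 1 - i) = (a + 1) * ∏ i ∈ Finset.range j, (a - i) := by
    rw [Finset.prod_range_succ']
    have : ∀ i ∈ Finset.range j, (a + 1 - ((i:ℕ) + 1 : ℕ)) = a - i := by
      intro i _; push_cast; ring
    rw [Finset.prod_congr rfl this]
    push_cast; ring
  have h : (Nat.factorial (j+1) : ℝ) = (j+1) * Nat.factorial j := by
    push_cast [Nat.factorial_succ]; ring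
  simp only [genBinom, h1, Finset.prod_range_succ, h]
  have h2 : (Nat.factorial j : ℝ) ≠ 0 := by positivity
  have h3 : ((j:ℝ)+1) ≠ 0 := by positivity
  field_simp
  ring

lemma jacobi_contig (α β x : ℝ) (n : ℕ) :
    (2*((n:ℝ)+1) + α + β + 1) * jacobiP α β (n+1) x
      = (((n:ℝ)+1) + α + β + 1) * jacobiP (α+1) β (n+1) x
        - (((n:ℝ)+1) + β) * jacobiP (α+1) β n x := by
  have huv : (x+1)/2 = (x-1)/2 + 1 := by ring
  set F : ℕ → ℝ := fun k => if k ≤ n then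
      genBinom ((n:ℝ)+1+α) (n-k) * genBinom ((n:ℝ)+β) k * ((x-1)/2)^k * ((x+1)/2)^(n+1-k)
    else 0 with hF
  set G : ℕ → ℝ := fun k => if k = 0 then 0 else
      genBinom ((n:ℝ)+1+α) (n-(k-1)) * genBinom ((n:ℝ)+β) (k-1) * ((x-1)/2)^k * ((x+1)/2)^(n+1-k)
    with hG
  have split : jacobiP (α+1) β n x
      = (∑ k ∈ Finset.range (n+2), F k) - (∑ k ∈ Finset.range (n+2), G k) := by
    have e1 : (∑ k ∈ Finset.range (n+2), F k)
        = ∑ k ∈ Finset.range (n+1),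
            genBinom ((n:ℝ)+1+α) (n-k) * genBinom ((n:ℝ)+β) k * ((x-1)/2)^k * ((x+1)/2)^(n+1-k) := by
      rw [Finset.sum_range_succ]
      have : F (n+1) = 0 := by simp [hF]
      rw [this, add_zero]
      apply Finset.sum_congr rfl
      intro k hk
      have hk' : k ≤ n := by have := Finset.mem_range.mp hk; omega
      simp [hF, hk']
    have e2 : (∑ k ∈ Finset.range (n+2), G k)
        = ∑ k ∈ Finset.range (n+1),
            genBinom ((n:ℝ)+1+α) (n-k) * genBinom ((n:ℝ)+β) k * ((x-1)/2)^(k+1) * ((x+1)/2)^(n-k) := by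
      rw [Finset.sum_range_succ']
      have h0 : G 0 = 0 := by simp [hG]
      rw [h0, add_zero]
      apply Finset.sum_congr rfl
      intro k hk
      have : (n + 1) - (k+1) = n - k := by omega
      simp [hG, this]
    rw [e1, e2, ← Finset.sum_sub_distrib]
    unfold jacobiP
    apply Finset.sum_congr rfl
    intro k hk
    have hk' : k ≤ n := by have := Finset.mem_range.mp hk; omega
    have h1 : n+1-k = (n-k)+1 := by omega
    have hA : (n:ℝ) + (α+1) = (n:ℝ)+1+α := by ring
    rw [hA, h1, pow_succ, pow_succ]
    linear_combination (genBinom ((n:ℝ)+1+α) (n-k) * genBinom ((n:ℝ)+β) k * ((x-1)/2)^k * ((x+1)/2)^(n-k)) * huv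
  rw [split]
  unfold jacobiP
  push_cast
  rw [mul_sub, Finset.mul_sum, Finset.mul_sum, Finset.mul_sum, Finset.mul_sum,
    ← Finset.sum_sub_distrib, ← Finset.sum_sub_distrib]
  apply Finset.sum_congr rfl
  intro k hk
  rcases k with _ | j
  · -- k = 0
    have hF0 : F 0 = genBinom ((n:ℝ)+1+α) n * genBinom ((n:ℝ)+β) 0 * ((x-1)/2)^0 * ((x+1)/2)^(n+1) := by
      simp [hF]
    have hG0 : G 0 = 0 := by simp [hG]
    rw [hF0, hG0]
    have hc : (n:ℝ)+1+(α+1) = ((n:ℝ)+1+α)+1 := by ring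
    rw [hc]
    have hP := genBinom_pascal ((n:ℝ)+1+α) n
    have hM := genBinom_succ_mul ((n:ℝ)+1+α) n
    simp only [Nat.sub_zero, pow_zero, genBinom_zero, mul_one, one_mul]
    linear_combination ((x+1)/2)^(n+1) * hM - ((n:ℝ)+1+α+β+1) * ((x+1)/2)^(n+1) * hP
  · by_cases hj : j + 1 ≤ n
    · -- middle case
      have hF1 : F (j+1) = genBinom ((n:ℝ)+1+α) (n-(j+1)) * genBinom ((n:ℝ)+β) (j+1) *
          ((x-1)/2)^(j+1) * ((x+1)/2)^(n+1-(j+1)) := by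
        simp [hF, hj]
      have hG1 : G (j+1) = genBinom ((n:ℝ)+1+α) (n-j) * genBinom ((n:ℝ)+β) j *
          ((x-1)/2)^(j+1) * ((x+1)/2)^(n+1-(j+1)) := by
        simp [hG]
      rw [hF1, hG1]
      have hs : n + 1 - (j+1) = (n - (j+1)) + 1 := by omega
      have hns : n - j = (n - (j+1)) + 1 := by omega
      rw [hs, hns]
      set s : ℕ := n - (j+1) with hsdef
      have hcast : (s:ℝ) = (n:ℝ) - (j:ℝ) - 1 := by
        rw [hsdef]; push_cast [Nat.cast_sub hj]; ring
      have hc1 : (n:ℝ)+1+(α+1) = ((n:ℝ)+1+α)+1 := by ring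
      have hc2 : (n:ℝ)+1+β = ((n:ℝ)+β)+1 := by ring
      rw [hc1, hc2]
      rw [genBinom_pascal ((n:ℝ)+1+α) s, genBinom_pascal ((n:ℝ)+β) j]
      have hM1 := genBinom_succ_mul ((n:ℝ)+1+α) s
      have hM2 := genBinom_succ_mul ((n:ℝ)+β) j
      have hs1 : ((s:ℝ)+1) ≠ 0 := by positivity
      have hj1 : ((j:ℝ)+1) ≠ 0 := by positivity
      have hX : genBinom ((n:ℝ)+1+α) (s+1)
          = ((n:ℝ)+1+α-(s:ℝ)) * genBinom ((n:ℝ)+1+α) s / ((s:ℝ)+1) := by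
        field_simp; linear_combination hM1
      have hZ : genBinom ((n:ℝ)+β) (j+1)
          = ((n:ℝ)+β-(j:ℝ)) * genBinom ((n:ℝ)+β) j / ((j:ℝ)+1) := by
        field_simp; linear_combination hM2
      rw [hX, hZ, hcast]
      have hnj : (n:ℝ) - (j:ℝ) ≠ 0 := by
        have : (j:ℝ) + 1 ≤ (n:ℝ) := by exact_mod_cast hj
        intro h; linarith
      have hnj' : (n:ℝ) - (j:ℝ) - 1 + 1 ≠ 0 := by
        intro h; apply hnj; linarith
      field_simp
      ring
    · -- k = n+1
      have hjn : j = n := by have := Finset.mem_range.mp hk; omega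
      subst hjn
      have hF1 : F (j+1) = 0 := by simp [hF, hj]
      have hG1 : G (j+1) = genBinom ((j:ℝ)+1+α) 0 * genBinom ((j:ℝ)+β) j *
          ((x-1)/2)^(j+1) * ((x+1)/2)^(j+1-(j+1)) := by
        simp [hG]
      rw [hF1, hG1]
      have hc1 : (j:ℝ)+1+(α+1) = ((j:ℝ)+1+α)+1 := by ring
      have hc2 : (j:ℝ)+1+β = ((j:ℝ)+β)+1 := by ring
      rw [hc1, hc2]
      have hP2 := genBinom_pascal ((j:ℝ)+β) j
      have hM2 := genBinom_succ_mul ((j:ℝ)+β) j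
      simp only [Nat.sub_self, pow_zero, genBinom_zero, mul_one, one_mul]
      linear_combination ((x-1)/2)^(j+1) * hM2 + ((j:ℝ)+1) * ((x-1)/2)^(j+1) * hP2

theorem statement_0 (α β : ℝ) (hα : -1/2 < α) (hβ : -1/2 < β) (l : ℕ)
    (x : ℝ) (hx1 : -1 ≤ x) (hx2 : x < 1) :
    ∑ k ∈ Finset.range (l + 1),
        (2 * (k : ℝ) + α + β + 1) *
          (Real.Gamma ((k : ℝ) + α + β + 1) / Real.Gamma ((k : ℝ) + β + 1)) *
          jacobiP α β k x
      = (Real.Gamma ((l : ℝ) + α + β + 2) / Real.Gamma ((l : ℝ) + β + 1)) *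
          jacobiP (α + 1) β l x := by
  induction l with
  | zero =>
    have h0 : jacobiP α β 0 x = 1 := by simp [jacobiP, genBinom]
    have h1 : jacobiP (α+1) β 0 x = 1 := by simp [jacobiP, genBinom]
    rw [Finset.sum_range_one, h0, h1]
    push_cast
    have hne : α+β+1 ≠ 0 := by linarith
    have h2 : (0:ℝ)+α+β+2 = (α+β+1)+1 := by ring
    rw [h2, Real.Gamma_add_one hne]
    have h3 : (0:ℝ)+α+β+1 = α+β+1 := by ring
    have h4 : (0:ℝ)+β+1 = β+1 := by ring
    rw [h3, h4]
    have hg : Real.Gamma (β+1) ≠ 0 := by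
      have : (0:ℝ) < β+1 := by linarith
      exact ne_of_gt (Real.Gamma_pos_of_pos this)
    field_simp
    ring
  | succ l ih =>
    rw [Finset.sum_range_succ, ih]
    have hc := jacobi_contig α β x l
    have hl0 : (0:ℝ) ≤ (l:ℝ) := Nat.cast_nonneg l
    have hb : (0:ℝ) < (l:ℝ)+β+1 := by linarith
    have hab : (0:ℝ) < (l:ℝ)+α+β+2 := by linarith
    have hG1 : Real.Gamma ((l:ℝ)+β+1) ≠ 0 := ne_of_gt (Real.Gamma_pos_of_pos hb)
    push_cast
    have e1 : ((l:ℝ)+1)+α+β+1 = ((l:ℝ)+α+β+1)+1 := by ring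
    have e2 : ((l:ℝ)+1)+β+1 = ((l:ℝ)+β+1)+1 := by ring
    have e3 : ((l:ℝ)+1)+α+β+2 = ((l:ℝ)+α+β+2)+1 := by ring
    rw [e1, e2, e3, Real.Gamma_add_one (by linarith : (l:ℝ)+α+β+1 ≠ 0),
      Real.Gamma_add_one (ne_of_gt hb), Real.Gamma_add_one (ne_of_gt hab)]
    have hg : Real.Gamma ((l:ℝ)+α+β+2) = ((l:ℝ)+α+β+1) * Real.Gamma ((l:ℝ)+α+β+1) := by
      rw [show (l:ℝ)+α+β+2 = ((l:ℝ)+α+β+1)+1 by ring,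
        Real.Gamma_add_one (by linarith : (l:ℝ)+α+β+1 ≠ 0)]
    rw [hg]
    have h2 : ((l:ℝ)+β+1) ≠ 0 := ne_of_gt hb
    have t1 : ((l:ℝ)+α+β+1) * Real.Gamma ((l:ℝ)+α+β+1) / Real.Gamma ((l:ℝ)+β+1)
          * jacobiP (α+1) β l x
        = (((l:ℝ)+β+1) * (((l:ℝ)+α+β+1) * Real.Gamma ((l:ℝ)+α+β+1)))
            / (((l:ℝ)+β+1) * Real.Gamma ((l:ℝ)+β+1)) * jacobiP (α+1) β l x := by
      rw [mul_div_mul_left _ _ h2]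
    rw [t1]
    linear_combination (((l:ℝ)+α+β+1) * Real.Gamma ((l:ℝ)+α+β+1) / (((l:ℝ)+β+1) * Real.Gamma ((l:ℝ)+β+1))) * hc
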